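/- arXiv:1607.00668 — 2 statements merged into one kernel-verified Lean document; each statement's English description precedes it below -/
import Mathlib

section
/- Every prerigid monomorphism between augmented directed complexes with bases is rigid: if f : K → L is an injective morphism of augmented directed complexes with bases sending basis elements to basis elements, then for every basis element b of K and all ε ∈ {0,1} and 0 ≤ k ≤ |b|, one has f(⟨b⟩^ε_k) = ⟨f(b)⟩^ε_k. -/
noncomputable section

/-- An augmented directed complex *with basis*, presented in the free model:
the degree-`n` part is the free abelian group `B n →₀ ℤ` on the basis `B n`,
and the positivity submonoid is the set of `ℕ`-linear combinations of basis
elements (i.e. the finitely supported functions with non-negative values). -/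
structure BCx where
  B : ℕ → Type
  d : ∀ n, (B (n + 1) →₀ ℤ) →+ (B n →₀ ℤ)
  e : (B 0 →₀ ℤ) →+ ℤ
  dd : ∀ n x, d n (d (n + 1) x) = 0
  ed : ∀ x, e (d 0 x) = 0

/-- The free abelian group in degree `n`. -/
abbrev BCx.Fr (K : BCx) (n : ℕ) : Type := K.B n →₀ ℤ

/-- The positive part `x₊` of an element of a free abelian group with chosen
basis. -/
def fPos {α : Type} (x : α →₀ ℤ) : α →₀ ℤ :=
  x.mapRange (fun c => max c 0) (by simp)

/-- The negative part `x₋` (so that `x = x₊ - x₋` with disjoint supports). -/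
def fNeg {α : Type} (x : α →₀ ℤ) : α →₀ ℤ :=
  x.mapRange (fun c => max (-c) 0) (by simp)

/-- `part true = (·)₊`, `part false = (·)₋`. -/
def part (ε : Bool) {α : Type} (x : α →₀ ℤ) : α →₀ ℤ :=
  if ε then fPos x else fNeg x

/-- Membership in the positivity submonoid (`ℕ`-combinations of the basis). -/
def Nonneg {α : Type} (x : α →₀ ℤ) : Prop := ∀ a, 0 ≤ x a

/-- The differential, extended by `0` in degree `0`. -/
def BCx.DD (K : BCx) : ∀ n, K.Fr n →+ K.Fr (n - 1)
  | 0 => 0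
  | n + 1 => K.d n

/-- The table `⟨x⟩` of Steiner, by downward recursion: `m` steps below the
degree `i` of the homogeneous element `x`, i.e. `K.tbl i ε x m = ⟨x⟩^ε_{i-m}`,
with `⟨x⟩^ε_i = x`, `⟨x⟩^0_{k-1} = d(⟨x⟩^0_k)₋` and
`⟨x⟩^1_{k-1} = d(⟨x⟩^1_k)₊`  (`ε = false ↔ 0`, `ε = true ↔ 1`). -/
def BCx.tbl (K : BCx) (i : ℕ) (ε : Bool) (x : K.Fr i) : ∀ m : ℕ, K.Fr (i - m)
  | 0 => x
  | m + 1 => part ε (K.DD (i - m) (K.tbl i ε x m))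

/-- The table `⟨x⟩^ε_k` indexed by the target degree `k` (equal to `0` for
`k > i = |x|`). -/
def BCx.tblAt (K : BCx) (i : ℕ) (ε : Bool) (x : K.Fr i) (k : ℕ) : K.Fr k :=
  if h : k ≤ i then cast (congrArg K.Fr (Nat.sub_sub_self h)) (K.tbl i ε x (i - k))
  else 0

/-- Morphisms of augmented directed complexes with bases (in the free model):
compatibility with differentials and augmentations, and preservation of the
positivity submonoids. -/
structure BHom (K L : BCx) where
  f : ∀ n, K.Fr n →+ L.Fr n
  comm_d : ∀ n x, f n (K.d n x) = L.d n (f (n + 1) x)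
  comm_e : ∀ x, L.e (f 0 x) = K.e x
  map_pos : ∀ n x, Nonneg x → Nonneg (f n x)

/-- A morphism is *prerigid* if it sends each basis element to a basis
element. -/
def BHom.Prerigid {K L : BCx} (φ : BHom K L) : Prop :=
  ∀ (n : ℕ) (b : K.B n), ∃ b', φ.f n (Finsupp.single b 1) = Finsupp.single b' 1

/-- A morphism is *rigid* if it is prerigid and moreover preserves the tables
of basis elements: `f(⟨b⟩^ε_k) = ⟨f(b)⟩^ε_k` for `0 ≤ k ≤ |b|`. -/
def BHom.Rigid {K L : BCx} (φ : BHom K L) : Prop :=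
  φ.Prerigid ∧
  ∀ (i : ℕ) (b : K.B i) (ε : Bool) (k : ℕ), k ≤ i →
    φ.f k (K.tblAt i ε (Finsupp.single b 1) k) =
      L.tblAt i ε (φ.f i (Finsupp.single b 1)) k

lemma cast_f {K L : BCx} (φ : BHom K L) {n m : ℕ} (e : n = m) (y : K.Fr n) :
    φ.f m (cast (congrArg K.Fr e) y) = cast (congrArg L.Fr e) (φ.f n y) := by
  subst e; rfl

lemma mapRange_mapDomain {α β : Type} (g : α → β) (hg : Function.Injective g)
    (h : ℤ → ℤ) (h0 : h 0 = 0) (x : α →₀ ℤ) :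
    Finsupp.mapRange h h0 (Finsupp.mapDomain g x)
      = Finsupp.mapDomain g (Finsupp.mapRange h h0 x) := by
  ext b
  by_cases hb : b ∈ Set.range g
  · obtain ⟨a, rfl⟩ := hb
    rw [Finsupp.mapRange_apply, Finsupp.mapDomain_apply hg, Finsupp.mapDomain_apply hg,
      Finsupp.mapRange_apply]
  · rw [Finsupp.mapRange_apply, Finsupp.mapDomain_notin_range _ _ hb,
      Finsupp.mapDomain_notin_range _ _ hb, h0]

lemma part_mapDomain {α β : Type} (g : α → β) (hg : Function.Injective g)
    (ε : Bool) (x : α →₀ ℤ) :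
    part ε (Finsupp.mapDomain g x) = Finsupp.mapDomain g (part ε x) := by
  cases ε <;> simp only [part, fPos, fNeg, if_true, if_false, Bool.false_eq_true] <;>
    exact mapRange_mapDomain g hg _ (by simp) x

/-- Every prerigid monomorphism between augmented directed
complexes with bases is rigid: if `φ : K → L` is injective and sends basis
elements to basis elements, then for every basis element `b` of degree `i`,
every `ε ∈ {0,1}` and every `0 ≤ k ≤ i`, one has
`φ(⟨b⟩^ε_k) = ⟨φ(b)⟩^ε_k`. -/
theorem statement5 (K L : BCx) (φ : BHom K L)
    (hmono : ∀ n, Function.Injective (φ.f n)) (hpre : φ.Prerigid) : φ.Rigid := by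
  -- choose the map on bases
  choose g hg using hpre
  -- g is injective
  have ginj : ∀ n, Function.Injective (g n) := by
    intro n b b' h
    have : φ.f n (Finsupp.single b 1) = φ.f n (Finsupp.single b' 1) := by
      rw [hg, hg, h]
    have := hmono n this
    exact Finsupp.single_left_injective (one_ne_zero) this
  -- f n is mapDomain (g n)
  have feq : ∀ n (x : K.Fr n), φ.f n x = Finsupp.mapDomain (g n) x := by
    intro n
    have : φ.f n = Finsupp.mapDomain.addMonoidHom (g n) := by
      apply Finsupp.addHom_ext
      intro b c
      have h1 : (Finsupp.single b c : K.Fr n) = c • Finsupp.single b 1 := by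
        simp [Finsupp.smul_single]
      rw [h1, map_zsmul, map_zsmul, hg]
      simp [Finsupp.mapDomain.addMonoidHom_apply, Finsupp.mapDomain_single,
        Finsupp.smul_single]
    intro x; rw [this]; rfl
  -- f commutes with parts
  have fpart : ∀ n (ε : Bool) (x : K.Fr n), φ.f n (part ε x) = part ε (φ.f n x) := by
    intro n ε x
    rw [feq, feq, part_mapDomain _ (ginj n)]
  -- f commutes with DD
  have fDD : ∀ n (x : K.Fr n), φ.f (n - 1) (K.DD n x) = L.DD n (φ.f n x) := by
    intro n x
    cases n with
    | zero => simp [BCx.DD]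
    | succ n => exact φ.comm_d n x
  -- f commutes with tbl
  have ftbl : ∀ i (ε : Bool) (x : K.Fr i) (m : ℕ),
      φ.f (i - m) (K.tbl i ε x m) = L.tbl i ε (φ.f i x) m := by
    intro i ε x m
    induction m with
    | zero => rfl
    | succ m ih =>
      show φ.f (i - m - 1) _ = _
      rw [BCx.tbl, BCx.tbl, fpart, fDD, ih]
  refine ⟨fun n b => ⟨g n b, hg n b⟩, fun i b ε k hk => ?_⟩
  unfold BCx.tblAt
  rw [dif_pos hk, dif_pos hk, cast_f φ (Nat.sub_sub_self hk), ftbl]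

end
end

section
/- Let f, g : K → L and f', g' : L → M be morphisms of augmented directed complexes, h an antihomotopy from f to g and h' an antihomotopy from f' to g'. Then the family (h'h)_i = h'_{i+1} ∘ h_i defines a 2-antihomotopy from g'h + h'f to h'g + f'h; that is, for all i ≥ 0 (with conventions (h'h)_{-1} = 0, d_0 = e): d_{i+2}(h'h)_i − (h'h)_{i-1}d_i = (-1)^i((h'_i g_i + f'_{i+1}h_i) − (g'_{i+1}h_i + h'_i f_i)), and (h'h)_i(K*_i) ⊆ M*_{i+2}. -/
/-- An *augmented directed complex*: a chain complex of abelian groups in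
non-negative degrees (`d n : X (n+1) →+ X n`), with an augmentation
`e : X 0 →+ ℤ` satisfying `e ∘ d₁ = 0`, and a positivity submonoid in each
degree. -/
structure ADC where
  X : ℕ → Type
  [inst : ∀ n, AddCommGroup (X n)]
  d : ∀ n, X (n + 1) →+ X n
  e : X 0 →+ ℤ
  dd : ∀ n x, d n (d (n + 1) x) = 0
  ed : ∀ x, e (d 0 x) = 0
  pos : ∀ n, AddSubmonoid (X n)

attribute [instance] ADC.inst

/-- Morphisms of augmented directed complexes: chain maps compatible with the
augmentations and preserving the positivity submonoids. -/
structure ADCHom (K L : ADC) where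
  f : ∀ n, K.X n →+ L.X n
  comm_d : ∀ n x, f n (K.d n x) = L.d n (f (n + 1) x)
  comm_e : ∀ x, L.e (f 0 x) = K.e x
  map_pos : ∀ n x, x ∈ K.pos n → f n x ∈ L.pos n

def ADCHom.id (K : ADC) : ADCHom K K where
  f _ := AddMonoidHom.id _
  comm_d _ _ := rfl
  comm_e _ := rfl
  map_pos _ _ hx := hx

def ADCHom.comp {K L M : ADC} (ψ : ADCHom L M) (φ : ADCHom K L) : ADCHom K M where
  f n := (ψ.f n).comp (φ.f n)
  comm_d n x := by
    simp only [AddMonoidHom.comp_apply]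
    rw [φ.comm_d, ψ.comm_d]
  comm_e x := by
    simp only [AddMonoidHom.comp_apply]
    rw [ψ.comm_e, φ.comm_e]
  map_pos n x hx := ψ.map_pos n _ (φ.map_pos n x hx)

/-- The carrier of the suspension of `K` : `ℤ` in degree `0` and `K.X n` in
degree `n+1`.  Equivalently, this is the family `K_{n-1}` (with `K_{-1} = ℤ`)
indexed by `n`. -/
def ADC.S (K : ADC) : ℕ → Type
  | 0 => ℤ
  | n + 1 => K.X n

instance ADC.instSAdd (K : ADC) : ∀ n, AddCommGroup (K.S n)
  | 0 => inferInstanceAs (AddCommGroup ℤ)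
  | n + 1 => inferInstanceAs (AddCommGroup (K.X n))

/-- The differential of the suspension : in lowest degree it is the
augmentation (`d₀ = e` convention), in higher degrees the differential of `K`. -/
def ADC.Sd (K : ADC) : ∀ n, K.S (n + 1) →+ K.S n
  | 0 => K.e
  | n + 1 => K.d n

/-- The positivity submonoids of the suspension : `ℕ ⊆ ℤ` in degree `0`. -/
noncomputable def ADC.Spos (K : ADC) : ∀ n, AddSubmonoid (K.S n)
  | 0 => AddSubmonoid.nonneg ℤ
  | n + 1 => K.pos n

/-- The suspension of a morphism (the identity of `ℤ` in degree `0`). -/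
def ADCHom.Sf {K L : ADC} (φ : ADCHom K L) : ∀ n, K.S n →+ L.S n
  | 0 => AddMonoidHom.id ℤ
  | n + 1 => φ.f n
/-- An *antihomotopy* from `a` to `b` (two morphisms `K → L` of augmented
directed complexes): a family `h_i : K_i →+ L_{i+1}` satisfying
`d_{i+1} h_i - h_{i-1} d_i = (-1)^i (b_i - a_i)` (with the conventions
`h_{-1} = 0` and `d_0 = e`, so that for `i = 0` one gets
`d_1 h_0 = b_0 - a_0`), and preserving positivity. -/
structure Antihtpy {K L : ADC} (a b : ADCHom K L) where
  h : ∀ i, K.X i →+ L.X (i + 1)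
  cond0 : ∀ x, L.d 0 (h 0 x) = b.f 0 x - a.f 0 x
  cond : ∀ i x, L.d (i + 1) (h (i + 1) x) - h i (K.d i x) =
    ((-1 : ℤ) ^ (i + 1)) • (b.f (i + 1) x - a.f (i + 1) x)
  map_pos : ∀ i x, x ∈ K.pos i → h i x ∈ L.pos (i + 1)

/-- An augmented directed complex is *decent* if the augmentation is
non-negative on the degree-`0` positivity submonoid. -/
def ADC.Decent (L : ADC) : Prop := ∀ x ∈ L.pos 0, 0 ≤ L.e x

/-- Let `f, g : K → L` and `f', g' : L → M` be morphisms of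
augmented directed complexes, `h` an antihomotopy from `f` to `g` and `h'` an
antihomotopy from `f'` to `g'`.  Then the family `(h'h)_i = h'_{i+1} ∘ h_i`
defines a 2-antihomotopy from `g'h + h'f` to `h'g + f'h`: for all `i ≥ 0`
(with `(h'h)_{-1} = 0`, `d_0 = e`),
`d_{i+2}(h'h)_i - (h'h)_{i-1} d_i = (-1)^i ((h'_i g_i + f'_{i+1} h_i) - (g'_{i+1} h_i + h'_i f_i))`,
and `(h'h)_i (K*_i) ⊆ M*_{i+2}`. -/
theorem statement18 (K L M : ADC) (f g : ADCHom K L) (f' g' : ADCHom L M)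
    (h : Antihtpy f g) (h' : Antihtpy f' g') :
    (∀ x : K.X 0, M.d 1 (h'.h 1 (h.h 0 x)) =
      (h'.h 0 (g.f 0 x) + f'.f 1 (h.h 0 x)) -
        (g'.f 1 (h.h 0 x) + h'.h 0 (f.f 0 x))) ∧
    (∀ (i : ℕ) (x : K.X (i + 1)),
      M.d (i + 2) (h'.h (i + 2) (h.h (i + 1) x)) - h'.h (i + 1) (h.h i (K.d i x)) =
        ((-1 : ℤ) ^ (i + 1)) •
          ((h'.h (i + 1) (g.f (i + 1) x) + f'.f (i + 2) (h.h (i + 1) x)) -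
            (g'.f (i + 2) (h.h (i + 1) x) + h'.h (i + 1) (f.f (i + 1) x)))) ∧
    (∀ (i : ℕ) (x : K.X i), x ∈ K.pos i → h'.h (i + 1) (h.h i x) ∈ M.pos (i + 2)) := by
  refine ⟨?_, ?_, ?_⟩
  · intro x
    have e1 := h'.cond 0 (h.h 0 x)
    rw [h.cond0 x] at e1
    rw [sub_eq_iff_eq_add] at e1
    rw [e1]
    simp only [map_sub, pow_one, neg_smul, one_smul]
    abel
  · intro i x
    have e1 := h'.cond (i + 1) (h.h (i + 1) x)
    have e2 := h.cond i x
    rw [sub_eq_iff_eq_add] at e1 e2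
    rw [e2, map_add, map_zsmul, map_sub] at e1
    rw [e1]
    simp only [pow_succ, smul_sub, smul_add, map_add, map_sub, map_zsmul,
      mul_neg_one, neg_smul]
    abel
  · intro i x hx
    exact h'.map_pos (i + 1) _ (h.map_pos i x hx)
end
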